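/- There exists a real constant K such that ∑_{p prime, 2<p≤q} ln(1 + 1/(p−2)) − ln ln q tends to K as q → ∞. -/

import Mathlib

open Filter Topology Finset

namespace Mertens


/-- indicator: 1/p over odd primes -/
noncomputable def b (k : ℕ) : ℝ := if k.Prime ∧ 2 < k then (k : ℝ)⁻¹ else 0
/-- indicator: log p / p over odd primes -/
noncomputable def a (k : ℕ) : ℝ := if k.Prime ∧ 2 < k then Real.log k / k else 0
/-- indicator: log p / p over all primes -/
noncomputable def a2 (k : ℕ) : ℝ := if k.Prime then Real.log k / k else 0
/-- the summand of the theorem -/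
noncomputable def f (k : ℕ) : ℝ := if k.Prime ∧ 2 < k then Real.log (1 + 1 / ((k : ℝ) - 2)) else 0

noncomputable def A (n : ℕ) : ℝ := ∑ k ∈ range (n + 1), a k
noncomputable def A2 (n : ℕ) : ℝ := ∑ k ∈ range (n + 1), a2 k
noncomputable def T (n : ℕ) : ℝ := ∑ k ∈ range (n + 1), b k

lemma a_eq (k : ℕ) : a k = b k * Real.log k := by
  unfold a b; split <;> simp [div_eq_mul_inv, mul_comm]

lemma log_one_add_le {x : ℝ} (hx : 0 ≤ x) : Real.log (1 + x) ≤ x := by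
  have := Real.log_le_sub_one_of_pos (x := 1 + x) (by linarith)
  linarith

lemma le_log_one_add {x : ℝ} (hx : 0 ≤ x) : x / (1 + x) ≤ Real.log (1 + x) := by
  have h1 : (0:ℝ) < 1 + x := by linarith
  have := Real.log_le_sub_one_of_pos (x := (1 + x)⁻¹) (by positivity)
  have hlog : Real.log (1 + x)⁻¹ = - Real.log (1 + x) := Real.log_inv _
  rw [hlog] at this
  have h2 : (1 + x)⁻¹ - 1 = -(x / (1+x)) := by field_simp; ring
  rw [h2] at this; linarith

lemma summable_log_div_sq : Summable (fun k : ℕ => Real.log k / (k:ℝ)^2) := by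
  have h : Summable (fun k : ℕ => 2 / (k:ℝ)^(3/2 : ℝ)) := by
    have := (Real.summable_one_div_nat_rpow (p := (3/2:ℝ))).mpr (by norm_num)
    simpa [div_eq_mul_inv] using this.mul_left 2
  refine h.of_nonneg_of_le (fun k => ?_) (fun k => ?_)
  · rcases Nat.eq_zero_or_pos k with rfl | hk
    · simp
    · have : (1:ℝ) ≤ k := by exact_mod_cast hk
      positivity
  · rcases Nat.eq_zero_or_pos k with rfl | hk
    · simp
    have hk1 : (1:ℝ) ≤ (k:ℝ) := by exact_mod_cast hk
    have hlog : Real.log k ≤ (k:ℝ) ^ (1/2 : ℝ) / (1/2 : ℝ) :=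
      Real.log_le_rpow_div (by positivity) (by norm_num)
    have hklt : (0:ℝ) < k := by linarith
    have h2 : Real.log k / (k:ℝ)^2 ≤ (2 * (k:ℝ)^(1/2:ℝ)) / (k:ℝ)^2 := by
      apply div_le_div_of_nonneg_right ?_ (by positivity) |>.trans_eq rfl
      · linarith [hlog]
    refine h2.trans ?_
    rw [div_le_div_iff₀ (by positivity) (by positivity)]
    have : (k:ℝ)^(3/2:ℝ) * (k:ℝ)^(1/2:ℝ) = (k:ℝ)^2 := by
      rw [← Real.rpow_natCast (k:ℝ) 2, ← Real.rpow_add hklt]; norm_num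
    nlinarith [this]




-- prime factors of n!
lemma primeFactors_factorial (n : ℕ) :
    (n.factorial).primeFactors = (range (n+1)).filter Nat.Prime := by
  ext p
  simp only [Nat.mem_primeFactors, mem_filter, mem_range, Nat.lt_succ_iff]
  constructor
  · rintro ⟨hp, hdvd, -⟩
    exact ⟨(Nat.Prime.dvd_factorial hp).mp hdvd, hp⟩
  · rintro ⟨hle, hp⟩
    exact ⟨hp, (Nat.Prime.dvd_factorial hp).mpr hle, Nat.factorial_ne_zero n⟩

lemma log_factorial (n : ℕ) :
    Real.log (n.factorial : ℕ) =
      ∑ p ∈ (range (n+1)).filter Nat.Prime, (padicValNat p n.factorial : ℝ) * Real.log p := by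
  conv_lhs => rw [← Nat.factorization_prod_pow_eq_self (Nat.factorial_ne_zero n)]
  rw [Nat.prod_factorization_eq_prod_primeFactors]
  push_cast
  rw [Real.log_prod]
  · rw [primeFactors_factorial]
    refine Finset.sum_congr rfl fun p hp => ?_
    simp only [mem_filter] at hp
    rw [Real.log_pow, Nat.factorization_def _ hp.2]
  · intro p hp
    rw [primeFactors_factorial, mem_filter] at hp
    have := hp.2.pos
    positivity

-- Chebyshev theta bound
lemma theta_le (n : ℕ) :
    ∑ p ∈ (range (n+1)).filter Nat.Prime, Real.log p ≤ n * Real.log 4 := by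
  have h1 : Real.log (primorial n : ℕ) = ∑ p ∈ (range (n+1)).filter Nat.Prime, Real.log p := by
    unfold primorial
    push_cast
    rw [Real.log_prod]
    intro p hp
    rw [mem_filter] at hp
    have := hp.2.pos
    positivity
  rw [← h1]
  calc Real.log (primorial n : ℕ) ≤ Real.log ((4:ℕ)^n : ℕ) := by
        apply Real.log_le_log (by exact_mod_cast primorial_pos n)
        exact_mod_cast primorial_le_4_pow n
    _ = n * Real.log 4 := by push_cast; rw [Real.log_pow]




lemma padic_eq (p n : ℕ) (hp : p.Prime) :
    padicValNat p n.factorial = ∑ i ∈ Finset.Ico 1 (n+1), n / p ^ i := by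
  haveI : Fact p.Prime := ⟨hp⟩
  exact padicValNat_factorial (Nat.lt_succ_of_le (Nat.log_le_self p n))

lemma padic_lower (p n : ℕ) (hp : p.Prime) (hn : 1 ≤ n) :
    n / p ≤ padicValNat p n.factorial := by
  rw [padic_eq p n hp]
  have h1 : (1:ℕ) ∈ Finset.Ico 1 (n+1) := by simp; omega
  calc n / p = n / p ^ 1 := by rw [pow_one]
    _ ≤ _ := Finset.single_le_sum (f := fun i => n / p ^ i) (fun i _ => Nat.zero_le _) h1

-- cast lower bound for nat division
lemma cast_div_ge (n p : ℕ) (hp : 0 < p) : (n:ℝ)/p - 1 ≤ ((n / p : ℕ) : ℝ) := by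
  have h : n < (n / p + 1) * p :=
    (Nat.div_lt_iff_lt_mul hp).mp (Nat.lt_succ_self _)
  have hpR : (0:ℝ) < p := by exact_mod_cast hp
  have hR : (n:ℝ) < ((n/p : ℕ) + 1) * p := by exact_mod_cast h
  rw [div_sub_one (ne_of_gt hpR), div_le_iff₀ hpR]
  nlinarith




lemma geom_le (r : ℝ) (h0 : 0 ≤ r) (h1 : r ≤ 1/2) (m : ℕ) : ∑ j ∈ range m, r^j ≤ 2 := by
  have hr : r ≠ 1 := by linarith
  rw [geom_sum_eq hr]
  have hrm : (0:ℝ) ≤ r^m := by positivity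
  have hneg : r - 1 < 0 := by linarith
  rw [div_le_iff_of_neg hneg]
  nlinarith

lemma padic_upper (p n : ℕ) (hp : p.Prime) (hn : 1 ≤ n) :
    (padicValNat p n.factorial : ℝ) ≤ (n:ℝ)/p + 2*n/(p:ℝ)^2 := by
  have hp2 : 2 ≤ p := hp.two_le
  have hpR : (2:ℝ) ≤ p := by exact_mod_cast hp2
  have hppos : (0:ℝ) < p := by linarith
  rw [padic_eq p n hp]
  rw [Finset.sum_eq_sum_Ico_succ_bot (by omega : 1 < n+1)]
  push_cast
  have h1 : ((n / p ^ 1 : ℕ) : ℝ) ≤ (n:ℝ)/p := by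
    rw [pow_one]; exact Nat.cast_div_le
  have h2 : ∑ i ∈ Finset.Ico 2 (n+1), ((n / p ^ i : ℕ) : ℝ) ≤ 2*n/(p:ℝ)^2 := by
    have step1 : ∀ i ∈ Finset.Ico 2 (n+1), ((n / p ^ i : ℕ):ℝ) ≤ (n:ℝ) * ((p:ℝ)⁻¹)^i := by
      intro i _
      calc ((n / p ^ i : ℕ):ℝ) ≤ (n:ℝ)/(p:ℝ)^i := by
            have := Nat.cast_div_le (m := n) (n := p ^ i) (α := ℝ)
            push_cast at this; exact this
        _ = (n:ℝ) * ((p:ℝ)⁻¹)^i := by rw [inv_pow]; ring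
    refine (Finset.sum_le_sum step1).trans ?_
    rw [← Finset.mul_sum]
    have : ∑ i ∈ Finset.Ico 2 (n+1), ((p:ℝ)⁻¹)^i ≤ 2 * ((p:ℝ)⁻¹)^2 := by
      rw [Finset.sum_Ico_eq_sum_range]
      have : ∀ j ∈ range (n+1-2), ((p:ℝ)⁻¹)^(2+j) = ((p:ℝ)⁻¹)^2 * ((p:ℝ)⁻¹)^j := by
        intro j _; rw [pow_add]
      rw [Finset.sum_congr rfl this, ← Finset.mul_sum]
      have hg := geom_le ((p:ℝ)⁻¹) (by positivity)
        (by rw [inv_le_comm₀ hppos (by norm_num)] at *; norm_num; linarith) (n+1-2)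
      nlinarith [sq_nonneg ((p:ℝ)⁻¹), pow_pos (inv_pos.mpr hppos) 2]
    calc (n:ℝ) * ∑ i ∈ Finset.Ico 2 (n+1), ((p:ℝ)⁻¹)^i ≤ (n:ℝ) * (2 * ((p:ℝ)⁻¹)^2) := by
          apply mul_le_mul_of_nonneg_left this (by positivity)
      _ = 2*n/(p:ℝ)^2 := by field_simp
  linarith




noncomputable def Sig : ℝ := ∑' k : ℕ, Real.log k / (k:ℝ)^2

lemma log_div_sq_nonneg (k : ℕ) : 0 ≤ Real.log k / (k:ℝ)^2 := by
  rcases Nat.eq_zero_or_pos k with rfl | hk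
  · simp
  · have : (1:ℝ) ≤ k := by exact_mod_cast hk
    positivity

lemma A2_eq (n : ℕ) : A2 n = ∑ p ∈ (range (n+1)).filter Nat.Prime, Real.log p / p := by
  rw [A2, Finset.sum_filter]; rfl

lemma sum_log_sq_le (n : ℕ) :
    ∑ p ∈ (range (n+1)).filter Nat.Prime, Real.log p / (p:ℝ)^2 ≤ Sig := by
  calc ∑ p ∈ (range (n+1)).filter Nat.Prime, Real.log p / (p:ℝ)^2
      ≤ ∑ k ∈ range (n+1), Real.log k / (k:ℝ)^2 :=
        Finset.sum_le_sum_of_subset_of_nonneg (Finset.filter_subset _ _)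
          (fun k _ _ => log_div_sq_nonneg k)
    _ ≤ Sig := Summable.sum_le_tsum _ (fun k _ => log_div_sq_nonneg k) summable_log_div_sq

lemma stirling_lower (n : ℕ) (hn : 1 ≤ n) :
    (n:ℝ) * Real.log n - n ≤ Real.log (n.factorial : ℕ) := by
  have h := Real.pow_div_factorial_le_exp (n:ℝ) (by positivity) n
  have hfac : (0:ℝ) < (n.factorial : ℕ) := by exact_mod_cast n.factorial_pos
  have hpow : (0:ℝ) < (n:ℝ)^n := by
    have : (0:ℝ) < n := by exact_mod_cast hn
    positivity
  have h2 : (n:ℝ)^n ≤ Real.exp n * (n.factorial : ℕ) := by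
    rw [div_le_iff₀ hfac] at h; linarith [h]
  have h3 := Real.log_le_log hpow h2
  rw [Real.log_pow, Real.log_mul (Real.exp_ne_zero _) (ne_of_gt hfac), Real.log_exp] at h3
  linarith

lemma stirling_upper (n : ℕ) : Real.log (n.factorial : ℕ) ≤ (n:ℝ) * Real.log n := by
  have h := Nat.factorial_le_pow n
  have hfac : (0:ℝ) < (n.factorial : ℕ) := by exact_mod_cast n.factorial_pos
  have h2 : Real.log (n.factorial : ℕ) ≤ Real.log ((n:ℝ)^n) := by
    apply Real.log_le_log hfac; exact_mod_cast h
  rwa [Real.log_pow] at h2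






lemma Sig_nonneg : 0 ≤ Sig := tsum_nonneg log_div_sq_nonneg

lemma mertens1 (n : ℕ) (hn : 1 ≤ n) :
    |A2 n - Real.log n| ≤ Real.log 4 + 1 + 2 * Sig := by
  have hnR : (0:ℝ) < n := by exact_mod_cast hn
  set s := (range (n+1)).filter Nat.Prime with hs
  have hmem : ∀ p ∈ s, p.Prime := fun p hp => (mem_filter.mp hp).2
  have e1 : (n:ℝ) * A2 n = ∑ p ∈ s, (n:ℝ)/p * Real.log p := by
    rw [A2_eq, Finset.mul_sum]
    exact Finset.sum_congr rfl fun p _ => by ring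
  have hlognn : ∀ p ∈ s, (0:ℝ) ≤ Real.log p := by
    intro p hp
    exact Real.log_nonneg (by exact_mod_cast (hmem p hp).one_lt.le)
  have up : (n:ℝ) * A2 n ≤ (n:ℝ) * (Real.log n + Real.log 4) := by
    have h1 : ∀ p ∈ s, (n:ℝ)/p * Real.log p
        ≤ ((padicValNat p n.factorial : ℝ) + 1) * Real.log p := by
      intro p hp
      have hpp := hmem p hp
      have h1 := cast_div_ge n p hpp.pos
      have h2 : ((n/p : ℕ):ℝ) ≤ (padicValNat p n.factorial : ℝ) := by
        exact_mod_cast padic_lower p n hpp hn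
      have := hlognn p hp
      nlinarith
    calc (n:ℝ) * A2 n = ∑ p ∈ s, (n:ℝ)/p * Real.log p := e1
      _ ≤ ∑ p ∈ s, ((padicValNat p n.factorial : ℝ) + 1) * Real.log p :=
          Finset.sum_le_sum h1
      _ = ∑ p ∈ s, (padicValNat p n.factorial : ℝ) * Real.log p + ∑ p ∈ s, Real.log p := by
          rw [← Finset.sum_add_distrib]
          exact Finset.sum_congr rfl fun p _ => by ring
      _ ≤ (n:ℝ) * Real.log n + (n:ℝ) * Real.log 4 := by
          refine add_le_add ?_ (theta_le n)
          rw [← log_factorial]; exact stirling_upper n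
      _ = (n:ℝ) * (Real.log n + Real.log 4) := by ring
  have low : (n:ℝ) * (Real.log n - 1 - 2*Sig) ≤ (n:ℝ) * A2 n := by
    have h1 : ∀ p ∈ s, (padicValNat p n.factorial : ℝ) * Real.log p
        ≤ ((n:ℝ)/p) * Real.log p + 2*(n:ℝ) * (Real.log p / (p:ℝ)^2) := by
      intro p hp
      have := padic_upper p n (hmem p hp) hn
      have hl := hlognn p hp
      have hppos : (0:ℝ) < p := by exact_mod_cast (hmem p hp).pos
      have expand : ((n:ℝ)/p + 2*n/(p:ℝ)^2) * Real.log p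
          = ((n:ℝ)/p) * Real.log p + 2*(n:ℝ) * (Real.log p / (p:ℝ)^2) := by
        field_simp
      nlinarith [mul_le_mul_of_nonneg_right this hl]
    have h2 : Real.log (n.factorial : ℕ)
        ≤ (n:ℝ) * A2 n + 2*(n:ℝ) * Sig := by
      calc Real.log (n.factorial : ℕ)
          = ∑ p ∈ s, (padicValNat p n.factorial : ℝ) * Real.log p := log_factorial n
        _ ≤ ∑ p ∈ s, (((n:ℝ)/p) * Real.log p + 2*(n:ℝ) * (Real.log p / (p:ℝ)^2)) :=
            Finset.sum_le_sum h1
        _ = ∑ p ∈ s, ((n:ℝ)/p) * Real.log p + 2*(n:ℝ) * ∑ p ∈ s, Real.log p / (p:ℝ)^2 := by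
            rw [Finset.sum_add_distrib, Finset.mul_sum]
        _ ≤ (n:ℝ) * A2 n + 2*(n:ℝ) * Sig := by
            refine add_le_add (le_of_eq e1.symm) ?_
            exact mul_le_mul_of_nonneg_left (sum_log_sq_le n) (by positivity)
    have h3 := stirling_lower n hn
    nlinarith
  have hup' : A2 n - Real.log n ≤ Real.log 4 := by
    have := (mul_le_mul_iff_right₀ hnR).mp up; linarith
  have hlow' : -(1 + 2*Sig) ≤ A2 n - Real.log n := by
    have := (mul_le_mul_iff_right₀ hnR).mp low; linarith
  rw [abs_le]
  constructor
  · have h4 : (0:ℝ) ≤ Real.log 4 := Real.log_nonneg (by norm_num)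
    linarith
  · linarith [Sig_nonneg]





lemma a2_sub_a (k : ℕ) : a2 k - a k = if k = 2 then Real.log 2 / 2 else 0 := by
  unfold a2 a
  by_cases h2 : k = 2
  · subst h2
    rw [if_pos Nat.prime_two, if_neg (by norm_num), if_pos rfl]
    norm_num
  · by_cases hp : k.Prime
    · have h3 : 2 < k := lt_of_le_of_ne hp.two_le (Ne.symm h2)
      rw [if_pos hp, if_pos ⟨hp, h3⟩, if_neg h2]
      ring
    · rw [if_neg hp, if_neg (fun h => hp h.1), if_neg h2]
      ring

lemma A_eq_A2 {n : ℕ} (hn : 2 ≤ n) : A2 n - A n = Real.log 2 / 2 := by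
  rw [A2, A, ← Finset.sum_sub_distrib,
    Finset.sum_congr rfl (fun k _ => a2_sub_a k),
    Finset.sum_ite_eq' (range (n+1)) 2 (fun _ => Real.log 2 / 2),
    if_pos (mem_range.mpr (by omega))]

noncomputable def C1 : ℝ := Real.log 4 + 2 + 2 * Sig

lemma log2_le_one : Real.log 2 ≤ 1 := by
  have := Real.log_le_sub_one_of_pos (x := (2:ℝ)) (by norm_num); linarith

lemma C1_nonneg : 0 ≤ C1 := by
  have h4 : (0:ℝ) ≤ Real.log 4 := Real.log_nonneg (by norm_num)
  have := Sig_nonneg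
  unfold C1; linarith

lemma mertensA {j : ℕ} (hj : 3 ≤ j) : |A j - Real.log j| ≤ C1 := by
  have h1 := mertens1 j (by omega)
  have h2 := A_eq_A2 (n := j) (by omega)
  have h5 : 0 ≤ Real.log 2 := Real.log_nonneg (by norm_num)
  have h4 : Real.log 2 / 2 ≤ 1 := by linarith [log2_le_one]
  unfold C1
  rw [abs_le] at h1 ⊢
  constructor
  · linarith [h1.1]
  · linarith [h1.2]


lemma log3_pos : (1:ℝ) < Real.log 3 := by
  rw [show (1:ℝ) = Real.log (Real.exp 1) by rw [Real.log_exp]]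
  apply Real.log_lt_log (Real.exp_pos 1)
  calc Real.exp 1 < 2.7182818286 := Real.exp_one_lt_d9
    _ < 3 := by norm_num

lemma log_pos_of_ge3 {n : ℕ} (hn : 3 ≤ n) : (1:ℝ) < Real.log n := by
  calc (1:ℝ) < Real.log 3 := log3_pos
    _ ≤ Real.log n := Real.log_le_log (by norm_num) (by exact_mod_cast hn)

lemma T3 : T 3 = (3:ℝ)⁻¹ := by
  have h2 : ¬ (Nat.Prime 2 ∧ 2 < 2) := by simp
  have h3 : Nat.Prime 3 ∧ 2 < 3 := ⟨Nat.prime_three, by norm_num⟩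
  simp [T, b, Finset.sum_range_succ, h2, h3, Nat.not_prime_one, Nat.not_prime_zero]

lemma A3 : A 3 = Real.log 3 / 3 := by
  have h2 : ¬ (Nat.Prime 2 ∧ 2 < 2) := by simp
  have h3 : Nat.Prime 3 ∧ 2 < 3 := ⟨Nat.prime_three, by norm_num⟩
  simp [A, a, Finset.sum_range_succ, h2, h3, Nat.not_prime_one, Nat.not_prime_zero]

lemma abel (n : ℕ) (hn : 3 ≤ n) :
    T n = A n / Real.log n
      + ∑ j ∈ Ico 3 n, A j * (1/Real.log j - 1/Real.log (j+1)) := by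
  induction n, hn using Nat.le_induction with
  | base =>
      rw [T3, A3]
      have h3 : Real.log 3 ≠ 0 := by linarith [log3_pos]
      simp [h3]
      field_simp
  | succ n hn ih =>
      have hLn : Real.log n ≠ 0 := by
        have := log_pos_of_ge3 hn; linarith
      have hLn1 : Real.log ((n:ℝ)+1) ≠ 0 := by
        have : (1:ℝ) < Real.log (↑(n+1)) := log_pos_of_ge3 (by omega)
        push_cast at this; linarith
      have hT : T (n+1) = T n + b (n+1) := by rw [T, Finset.sum_range_succ]; rfl
      have hA : A (n+1) = A n + a (n+1) := by rw [A, Finset.sum_range_succ]; rfl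
      rw [Finset.sum_Ico_succ_top hn, hT, ih, hA, a_eq]
      push_cast
      field_simp
      ring
  done




noncomputable def d (j : ℕ) : ℝ := 1/Real.log j - 1/Real.log (j+1)
noncomputable def e (j : ℕ) : ℝ := Real.log (Real.log (j+1)) - Real.log (Real.log j)
noncomputable def g (j : ℕ) : ℝ := e j - Real.log j * d j


lemma log_cast_succ (j : ℕ) : Real.log ((j:ℝ)+1) = Real.log ((j+1 : ℕ) : ℝ) := by push_cast; rfl

lemma basic (j : ℕ) (hj : 3 ≤ j) :
    (1:ℝ) < Real.log j ∧ Real.log j < Real.log ((j:ℝ)+1)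
      ∧ Real.log ((j:ℝ)+1) - Real.log j ≤ 1/j := by
  have hjR : (3:ℝ) ≤ j := by exact_mod_cast hj
  have hL := log_pos_of_ge3 hj
  have hM : Real.log j < Real.log ((j:ℝ)+1) :=
    Real.log_lt_log (by linarith) (by linarith)
  refine ⟨hL, hM, ?_⟩
  have hδ : Real.log ((j:ℝ)+1) - Real.log j = Real.log (1 + 1/j) := by
    rw [← Real.log_div (by linarith) (by linarith)]
    congr 1
    field_simp
  rw [hδ]
  exact log_one_add_le (by positivity)

lemma d_nonneg (j : ℕ) (hj : 3 ≤ j) : 0 ≤ d j := by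
  obtain ⟨hL, hM, -⟩ := basic j hj
  rw [d, sub_nonneg]
  exact one_div_le_one_div_of_le (by linarith) hM.le

lemma g_bounds (j : ℕ) (hj : 3 ≤ j) : 0 ≤ g j ∧ g j ≤ ((j:ℝ)^2)⁻¹ := by
  obtain ⟨hL, hM, hδle⟩ := basic j hj
  set L := Real.log j with hLdef
  set M := Real.log ((j:ℝ)+1) with hMdef
  have hjR : (3:ℝ) ≤ j := by exact_mod_cast hj
  set δ := M - L with hδdef
  have hδpos : 0 < δ := by simp [hδdef]; linarith
  have hMpos : 0 < M := by linarith
  have hLpos : 0 < L := by linarith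
  have he : e j = Real.log (1 + δ/L) := by
    rw [e, ← hMdef, ← hLdef, ← Real.log_div (by linarith) (by linarith)]
    congr 1
    rw [hδdef]
    field_simp
    ring
  have hd : Real.log j * d j = δ/M := by
    rw [d, ← hLdef, ← hMdef, hδdef]
    field_simp
  have hup : Real.log (1 + δ/L) ≤ δ/L := log_one_add_le (by positivity)
  have hlow : δ/M ≤ Real.log (1 + δ/L) := by
    have := le_log_one_add (x := δ/L) (by positivity)
    have heq : (δ/L) / (1 + δ/L) = δ/M := by
      have h1 : 1 + δ/L = M/L := by rw [hδdef]; field_simp; ring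
      rw [h1]
      rw [div_div_div_eq]
      rw [div_eq_div_iff (by positivity) (by positivity)]
      ring
    rwa [heq] at this
  constructor
  · rw [g, he, hd]; linarith
  · rw [g, he, hd]
    have h1 : δ/L - δ/M = δ^2/(L*M) := by
      rw [hδdef]; field_simp
    have h2 : δ^2/(L*M) ≤ δ^2 := by
      rw [div_le_iff₀ (by positivity)]
      have hLM : 1 ≤ L*M := by nlinarith
      nlinarith [sq_nonneg δ]
    have h3 : δ^2 ≤ ((j:ℝ)^2)⁻¹ := by
      have : δ ≤ 1/j := hδle
      have hδ2 : δ^2 ≤ (1/(j:ℝ))^2 := by nlinarith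
      calc δ^2 ≤ (1/(j:ℝ))^2 := hδ2
        _ = ((j:ℝ)^2)⁻¹ := by field_simp
    linarith





noncomputable def h' (j : ℕ) : ℝ := if 3 ≤ j then (A j - Real.log j) * d j else 0
noncomputable def g' (j : ℕ) : ℝ := if 3 ≤ j then g j else 0
noncomputable def dd (j : ℕ) : ℝ := if 3 ≤ j then d j else 0

lemma telescope (f : ℕ → ℝ) {n : ℕ} (hn : 3 ≤ n) :
    ∑ j ∈ Ico 3 n, (f (j+1) - f j) = f n - f 3 := by
  rw [Finset.sum_Ico_eq_sub _ hn, Finset.sum_range_sub, Finset.sum_range_sub]; ring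

lemma e_eq (j : ℕ) :
    e j = Real.log (Real.log ((j+1 : ℕ) : ℝ)) - Real.log (Real.log j) := by
  simp only [e]; push_cast; ring_nf

lemma d_eq (j : ℕ) :
    d j = -(1/Real.log ((j+1 : ℕ) : ℝ) - 1/Real.log j) := by
  simp only [d]; push_cast; ring_nf

lemma sum_e {n : ℕ} (hn : 3 ≤ n) :
    ∑ j ∈ Ico 3 n, e j = Real.log (Real.log n) - Real.log (Real.log 3) := by
  rw [Finset.sum_congr rfl (fun j _ => e_eq j),
    telescope (fun i : ℕ => Real.log (Real.log i)) hn]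
  norm_num

lemma sum_d {n : ℕ} (hn : 3 ≤ n) :
    ∑ j ∈ Ico 3 n, d j = 1/Real.log 3 - 1/Real.log n := by
  rw [Finset.sum_congr rfl (fun j _ => d_eq j), Finset.sum_neg_distrib,
    telescope (fun i : ℕ => 1/Real.log i) hn]
  norm_num

lemma rearr (n : ℕ) (hn : 3 ≤ n) :
    T n - Real.log (Real.log n)
      = 1 - Real.log (Real.log 3) + (A n - Real.log n)/Real.log n
        + ∑ j ∈ Ico 3 n, (A j - Real.log j) * d j
        - ∑ j ∈ Ico 3 n, g j := by
  have hLn : Real.log (n : ℝ) ≠ 0 := by have := log_pos_of_ge3 hn; linarith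
  have split : ∀ j ∈ Ico 3 n, A j * (1/Real.log j - 1/Real.log (j+1))
      = (A j - Real.log j) * d j + (e j - g j) := by
    intro j _
    simp only [g, d]
    ring
  rw [abel n hn, Finset.sum_congr rfl split, Finset.sum_add_distrib,
    Finset.sum_sub_distrib, sum_e hn]
  have : A n / Real.log n = (A n - Real.log n)/Real.log n + 1 := by
    field_simp
    ring
  rw [this]
  ring

lemma range_split {u : ℕ → ℝ} (hu : ∀ j < 3, u j = 0) {n : ℕ} (hn : 3 ≤ n) :
    ∑ j ∈ range n, u j = ∑ j ∈ Ico 3 n, u j := by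
  rw [range_eq_Ico, ← Finset.sum_Ico_consecutive _ (by omega : 0 ≤ 3) hn]
  have h0 : ∑ j ∈ Ico 0 3, u j = 0 :=
    Finset.sum_eq_zero (fun j hj => hu j (mem_Ico.mp hj).2)
  rw [h0, zero_add]

lemma dd_nonneg (j : ℕ) : 0 ≤ dd j := by
  unfold dd; split
  · exact d_nonneg j (by assumption)
  · exact le_refl 0

lemma summable_dd : Summable dd := by
  apply summable_of_sum_range_le dd_nonneg (c := 1/Real.log 3)
  intro n
  rcases le_or_gt 3 n with hn | hn
  · rw [range_split (fun j hj => by unfold dd; rw [if_neg]; omega) hn]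
    have : ∑ j ∈ Ico 3 n, dd j = ∑ j ∈ Ico 3 n, d j :=
      Finset.sum_congr rfl (fun j hj => by unfold dd; rw [if_pos (mem_Ico.mp hj).1])
    rw [this, sum_d hn]
    have := log_pos_of_ge3 hn
    have h3 := log3_pos
    have : 0 ≤ 1/Real.log n := by positivity
    linarith
  · have : ∑ j ∈ range n, dd j = 0 :=
      Finset.sum_eq_zero (fun j hj => by
        unfold dd; rw [if_neg]; have := mem_range.mp hj; omega)
    rw [this]
    have h3 := log3_pos
    positivity

lemma summable_h' : Summable h' := by
  apply Summable.of_abs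
  apply Summable.of_nonneg_of_le (fun j => abs_nonneg _) (f := fun j => C1 * dd j)
  · intro j
    unfold h' dd
    split
    · rw [abs_mul, abs_of_nonneg (d_nonneg j (by assumption))]
      exact mul_le_mul_of_nonneg_right (mertensA (by assumption)) (d_nonneg j (by assumption))
    · simp
  · exact summable_dd.mul_left C1

lemma summable_g' : Summable g' := by
  apply Summable.of_nonneg_of_le (f := fun j : ℕ => ((j:ℝ)^2)⁻¹)
  · intro j; unfold g'; split
    · exact (g_bounds j (by assumption)).1
    · exact le_refl 0
  · intro j; unfold g'; split
    · exact (g_bounds j (by assumption)).2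
    · positivity
  · exact_mod_cast Real.summable_nat_pow_inv.mpr (by norm_num : 1 < 2)

lemma tendsto_Rterm : Tendsto (fun n : ℕ => (A n - Real.log n)/Real.log n) atTop (𝓝 0) := by
  have hlog : Tendsto (fun n : ℕ => Real.log n) atTop atTop :=
    Real.tendsto_log_atTop.comp tendsto_natCast_atTop_atTop
  have hinv : Tendsto (fun n : ℕ => (Real.log n)⁻¹) atTop (𝓝 0) := hlog.inv_tendsto_atTop
  have hbound : Tendsto (fun n : ℕ => C1 * (Real.log n)⁻¹) atTop (𝓝 0) := by
    simpa using hinv.const_mul C1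
  apply squeeze_zero_norm' ?_ hbound
  filter_upwards [eventually_ge_atTop 3] with n hn
  have hL := log_pos_of_ge3 hn
  rw [Real.norm_eq_abs, abs_div, abs_of_pos (by linarith : (0:ℝ) < Real.log n)]
  rw [div_eq_mul_inv]
  exact mul_le_mul_of_nonneg_right (mertensA hn) (by positivity)

lemma T_tendsto : ∃ K1 : ℝ, Tendsto (fun n : ℕ => T n - Real.log (Real.log n)) atTop (𝓝 K1) := by
  refine ⟨1 - Real.log (Real.log 3) + 0 + (∑' j, h' j) - (∑' j, g' j), ?_⟩
  have t2 : Tendsto (fun n : ℕ => ∑ j ∈ range n, h' j) atTop (𝓝 (∑' j, h' j)) :=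
    summable_h'.hasSum.tendsto_sum_nat
  have t3 : Tendsto (fun n : ℕ => ∑ j ∈ range n, g' j) atTop (𝓝 (∑' j, g' j)) :=
    summable_g'.hasSum.tendsto_sum_nat
  have comb : Tendsto (fun n : ℕ =>
      1 - Real.log (Real.log 3) + (A n - Real.log n)/Real.log n
        + ∑ j ∈ range n, h' j - ∑ j ∈ range n, g' j) atTop
      (𝓝 (1 - Real.log (Real.log 3) + 0 + (∑' j, h' j) - (∑' j, g' j))) := by
    exact (((tendsto_const_nhds.add tendsto_Rterm).add t2).sub t3)
  apply comb.congr'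
  filter_upwards [eventually_ge_atTop 3] with n hn
  rw [rearr n hn]
  have hh : ∑ j ∈ range n, h' j = ∑ j ∈ Ico 3 n, (A j - Real.log j) * d j := by
    rw [range_split (fun j hj => by unfold h'; rw [if_neg]; omega) hn]
    exact Finset.sum_congr rfl (fun j hj => by unfold h'; rw [if_pos (mem_Ico.mp hj).1])
  have hg : ∑ j ∈ range n, g' j = ∑ j ∈ Ico 3 n, g j := by
    rw [range_split (fun j hj => by unfold g'; rw [if_neg]; omega) hn]
    exact Finset.sum_congr rfl (fun j hj => by unfold g'; rw [if_pos (mem_Ico.mp hj).1])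
  rw [hh, hg]




noncomputable def c (k : ℕ) : ℝ := f k - b k


lemma c_bounds (k : ℕ) : 0 ≤ c k ∧ c k ≤ 6 * ((k:ℝ)^2)⁻¹ := by
  unfold c f b
  by_cases hk : k.Prime ∧ 2 < k
  · rw [if_pos hk, if_pos hk]
    have hk3 : 3 ≤ k := hk.2
    have hkR : (3:ℝ) ≤ k := by exact_mod_cast hk3
    have hx : (0:ℝ) < 1/((k:ℝ) - 2) := by
      apply div_pos one_pos; linarith
    constructor
    · have h1 := le_log_one_add (x := 1/((k:ℝ)-2)) hx.le
      have hne2 : ((k:ℝ)-2) ≠ 0 := by linarith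
      have heq : (1/((k:ℝ)-2)) / (1 + 1/((k:ℝ)-2)) = 1/((k:ℝ)-1) := by
        have hden : 1 + 1/((k:ℝ)-2) = ((k:ℝ)-1)/((k:ℝ)-2) := by
          field_simp
          ring
        rw [hden, div_div_div_eq, div_eq_div_iff (by nlinarith) (by linarith)]
        ring
      rw [heq] at h1
      have h2 : ((k:ℝ))⁻¹ ≤ 1/((k:ℝ)-1) := by
        rw [inv_eq_one_div]
        apply one_div_le_one_div_of_le (by linarith)
        linarith
      linarith
    · have h1 := log_one_add_le (x := 1/((k:ℝ)-2)) hx.le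
      have h2 : 1/((k:ℝ)-2) - (k:ℝ)⁻¹ ≤ 6 * ((k:ℝ)^2)⁻¹ := by
        rw [inv_eq_one_div, div_sub_div _ _ (by linarith : (k:ℝ) - 2 ≠ 0)
          (by linarith : (k:ℝ) ≠ 0), div_le_iff₀ (by nlinarith), mul_comm,
          mul_assoc]
        have h3 : ((k:ℝ)^2)⁻¹ * (((k:ℝ)-2) * k) = ((k:ℝ)-2)/k := by
          field_simp
        rw [h3, ← mul_div_assoc, le_div_iff₀ (by linarith : (0:ℝ) < k)]
        nlinarith
      linarith
  · rw [if_neg hk, if_neg hk]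
    refine ⟨by norm_num, ?_⟩
    have : (0:ℝ) ≤ 6*((k:ℝ)^2)⁻¹ := by positivity
    linarith


end Mertens

open Mertens in
/-- There is a constant `K` such that
`∑_{p prime, 2 < p ≤ q} ln(1 + 1/(p-2)) - ln ln q → K` as `q → ∞`. -/
theorem sum_log_odd_primes_asymp :
    ∃ K : ℝ, Tendsto (fun q : ℕ =>
        (∑ p ∈ (Finset.range (q + 1)).filter (fun p => p.Prime ∧ 2 < p),
          Real.log (1 + 1 / ((p : ℝ) - 2))) - Real.log (Real.log q))
      atTop (𝓝 K) := by
  obtain ⟨K1, hK1⟩ := T_tendsto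
  have hsumc : Summable c := by
    apply Summable.of_nonneg_of_le (fun k => (c_bounds k).1) (fun k => (c_bounds k).2)
    exact (Real.summable_nat_pow_inv.mpr (by norm_num : 1 < 2)).mul_left 6
  have hcs : Tendsto (fun q : ℕ => ∑ k ∈ Finset.range (q+1), c k) atTop (𝓝 (∑' k, c k)) :=
    hsumc.hasSum.tendsto_sum_nat.comp (tendsto_add_atTop_nat 1)
  refine ⟨K1 + ∑' k, c k, ?_⟩
  have hcomb := hK1.add hcs
  apply hcomb.congr
  intro q
  have hf : ∑ p ∈ (Finset.range (q+1)).filter (fun p => p.Prime ∧ 2 < p),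
      Real.log (1 + 1/((p:ℝ)-2)) = ∑ k ∈ Finset.range (q+1), f k := by
    rw [Finset.sum_filter]
    rfl
  have hsplit : ∑ k ∈ Finset.range (q+1), f k = T q + ∑ k ∈ Finset.range (q+1), c k := by
    rw [T, ← Finset.sum_add_distrib]
    exact Finset.sum_congr rfl (fun k _ => by unfold c; ring)
  rw [hf, hsplit]
  ring
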